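/- Let p > 3 be prime and let w, w' ∈ ℤ/p be nonzero. The pair of binary quadratic forms (a² + w·b², 2ab) is equivalent to (a² + w'·b², 2ab) if and only if there exists a unit u ∈ ℤ/p with w' = w·u⁴. Consequently the equivalence classes of pairs of the form (a² + w·b², 2ab) with w ≠ 0 are in one-to-one correspondence with the elements of (ℤ/p)ˣ/((ℤ/p)ˣ)⁴. -/

import Mathlib

/-- A binary quadratic form over `ZMod p`, recorded by its coefficients:
`Q(a,b) = c20·a² + c11·a·b + c02·b²`. -/
structure BQF (p : ℕ) where
  c20 : ZMod p
  c11 : ZMod p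
  c02 : ZMod p

/-- Evaluation of a binary quadratic form. -/
def BQF.eval {p : ℕ} (Q : BQF p) (a b : ZMod p) : ZMod p :=
  Q.c20 * a ^ 2 + Q.c11 * a * b + Q.c02 * b ^ 2

/-- Two pairs `(Q₁, Q₂)` and `(Q₁', Q₂')` of binary quadratic forms over `ZMod p`
are equivalent if there are `R ∈ GL₂(ℤ/p)` and `S ∈ GL₂(ℤ/p)` with `det S = ±1`
such that `Qᵢ(R·(a,b)) = sᵢ₁·Q₁'(a,b) + sᵢ₂·Q₂'(a,b)` for all `(a,b)` and `i = 1,2`. -/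
def PairEquiv {p : ℕ} (P P' : BQF p × BQF p) : Prop :=
  ∃ R S : Matrix (Fin 2) (Fin 2) (ZMod p),
    IsUnit R.det ∧ IsUnit S.det ∧ (S.det = 1 ∨ S.det = -1) ∧
    (∀ a b : ZMod p,
      P.1.eval (R 0 0 * a + R 0 1 * b) (R 1 0 * a + R 1 1 * b) =
        S 0 0 * P'.1.eval a b + S 0 1 * P'.2.eval a b) ∧
    (∀ a b : ZMod p,
      P.2.eval (R 0 0 * a + R 0 1 * b) (R 1 0 * a + R 1 1 * b) =
        S 1 0 * P'.1.eval a b + S 1 1 * P'.2.eval a b)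

/-- For `w ≠ 0` there is always an `A` with `A² - w` a nonsquare. -/
lemma BQF.exists_nonsq_aux {p : ℕ} [Fact p.Prime] (hp : 3 < p) (w : ZMod p) (hw : w ≠ 0) :
    ∃ A : ZMod p, ¬ IsSquare (A ^ 2 - w) := by
  by_contra hcon
  push_neg at hcon
  have key : ∀ k : ℕ, IsSquare (-((k : ZMod p) + 1) * w) := by
    intro k
    induction k with
    | zero => simpa using hcon 0
    | succ n ih =>
      obtain ⟨t, ht⟩ := ih
      have h2 := hcon t
      have e : t ^ 2 - w = -(((n : ZMod p) + 1) + 1) * w := by linear_combination -ht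
      rw [e] at h2
      convert h2 using 3
      push_cast
      ring
  obtain ⟨n, hn⟩ := FiniteField.exists_nonsquare (F := ZMod p)
    (by rw [ZMod.ringChar_zmod_n]; omega)
  apply hn
  have hk := key (-n * w⁻¹ - 1).val
  rw [ZMod.natCast_val, ZMod.cast_id] at hk
  have e2 : -((-n * w⁻¹ - 1) + 1) * w = n := by field_simp; ring
  rwa [e2] at hk

/-- The key classification: `(a² + w·b², 2ab)` is equivalent to `(a² + w'·b², 2ab)`
iff `w'/w` is a fourth power of a unit. -/
lemma BQF.pair_equiv_iff {p : ℕ} [Fact p.Prime] (hp : 3 < p) (w w' : ZMod p)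
    (hw : w ≠ 0) (hw' : w' ≠ 0) :
    PairEquiv ((⟨1, 0, w⟩ : BQF p), ⟨0, 2, 0⟩) (⟨1, 0, w'⟩, ⟨0, 2, 0⟩) ↔
      ∃ u : (ZMod p)ˣ, w' = w * (u : ZMod p) ^ 4 := by
  have two_ne : (2 : ZMod p) ≠ 0 := by
    have : ((2:ℕ) : ZMod p) ≠ 0 := by
      rw [Ne, ZMod.natCast_eq_zero_iff]
      intro h
      have := Nat.le_of_dvd (by norm_num) h
      omega
    simpa using this
  constructor
  · rintro ⟨R, S, hR, -, hdS, h1, h2e⟩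
    set A := R 0 0 with hA
    set B := R 0 1 with hB
    set C := R 1 0 with hC
    set D := R 1 1 with hD
    have e10 := h1 1 0
    have e01 := h1 0 1
    have e11 := h1 1 1
    have f10 := h2e 1 0
    have f01 := h2e 0 1
    have f11 := h2e 1 1
    simp only [BQF.eval] at e10 e01 e11 f10 f01 f11
    have hS00 : S 0 0 = A^2 + w*C^2 := by linear_combination -e10
    have hS10 : S 1 0 = 2*A*C := by linear_combination -f10
    have hS01 : S 0 1 = A*B + w*C*D := by
      apply mul_left_cancel₀ two_ne
      linear_combination e10 + e01 - e11
    have hS11 : S 1 1 = A*D + B*C := by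
      apply mul_left_cancel₀ two_ne
      linear_combination f10 + f01 - f11
    have key1 : B^2 + w*D^2 = (A^2 + w*C^2) * w' := by linear_combination e01 + w' * hS00
    have key2 : B*D = A*C*w' := by
      apply mul_left_cancel₀ two_ne
      linear_combination f01 + w' * hS10
    have hX : (A^2 - w*C^2) * (A*D - B*C) = S.det := by
      rw [Matrix.det_fin_two, hS00, hS01, hS10, hS11]; ring
    have hΔ : A*D - B*C ≠ 0 := by
      rw [Matrix.det_fin_two] at hR
      exact hR.ne_zero
    have hfac : (B^2 - w*D^2 - w'*(A^2 - w*C^2)) * (B^2 - w*D^2 + w'*(A^2 - w*C^2)) = 0 := by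
      linear_combination (B^2 + w*D^2 + (A^2 + w*C^2)*w') * key1 - 4*w*(B*D + A*C*w') * key2
    rcases mul_eq_zero.mp hfac with hc | hc
    · exfalso
      apply hΔ
      have hz : 2*w*((A*D - B*C)^2) = 2*w*0 := by
        linear_combination (A^2 + w*C^2) * key1 + (w*C^2 - A^2) * hc - 4*w*A*C*key2
      have := mul_left_cancel₀ (mul_ne_zero two_ne hw) hz
      exact pow_eq_zero_iff (n := 2) (by norm_num) |>.mp (by simpa using this)
    · have hw2 : w*(A*D-B*C)^2 = w'*(A^2-w*C^2)^2 := by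
        apply mul_left_cancel₀ two_ne
        linear_combination (A^2)*key1 - (A^2)*hc + w*C^2*key1 + w*C^2*hc - 4*w*A*C*key2
      have hXD2 : ((A^2-w*C^2)*(A*D-B*C))^2 = 1 := by
        rcases hdS with hh | hh <;> rw [hX, hh] <;> ring
      refine ⟨hR.unit, ?_⟩
      rw [IsUnit.unit_spec, Matrix.det_fin_two]
      linear_combination (-w') * hXD2 - (A*D-B*C)^2 * hw2
  · rintro ⟨u, rfl⟩
    have hu0 : (u : ZMod p) ≠ 0 := u.ne_zero
    by_cases hsq : IsSquare (u : ZMod p)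
    · obtain ⟨s, hs⟩ := hsq
      have hs0 : s ≠ 0 := by
        intro h; apply hu0; rw [hs, h, mul_zero]
      refine ⟨!![s⁻¹, 0; 0, (u : ZMod p)^2 * s⁻¹], !![s⁻¹^2, 0; 0, (u : ZMod p)^2 * s⁻¹^2],
        ?_, ?_, ?_, ?_, ?_⟩
      · rw [Matrix.det_fin_two_of]
        apply isUnit_iff_ne_zero.mpr
        field_simp
        simp [hs0, hu0]
      · rw [Matrix.det_fin_two_of]
        apply isUnit_iff_ne_zero.mpr
        field_simp
        simp [hs0, hu0]
      · left
        rw [Matrix.det_fin_two_of, hs]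
        field_simp
        ring
      · intro a b
        simp [BQF.eval]
        ring
      · intro a b
        simp [BQF.eval]
        ring
    · obtain ⟨A₀, hA⟩ := BQF.exists_nonsq_aux hp w hw
      set n := A₀^2 - w with hn
      have hn0 : n ≠ 0 := fun h => hA (h ▸ (by exact ⟨0, by rw [mul_zero]⟩))
      have hun : IsSquare ((u : ZMod p) * n) := by
        have h1 : quadraticChar (ZMod p) (u : ZMod p) = -1 :=
          quadraticChar_neg_one_iff_not_isSquare.mpr hsq
        have h2 : quadraticChar (ZMod p) n = -1 :=
          quadraticChar_neg_one_iff_not_isSquare.mpr hA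
        have h3 : quadraticChar (ZMod p) ((u : ZMod p) * n) = 1 := by
          rw [map_mul, h1, h2]; ring
        exact (quadraticChar_one_iff_isSquare (mul_ne_zero hu0 hn0)).mp h3
      obtain ⟨v, hv⟩ := hun
      have hv0 : v ≠ 0 := by
        intro h; rw [h, mul_zero] at hv; exact (mul_ne_zero hu0 hn0) hv
      refine ⟨!![A₀*v⁻¹, w*(u:ZMod p)^2*v⁻¹; v⁻¹, (u:ZMod p)^2*A₀*v⁻¹],
        !![(A₀^2+w)*v⁻¹^2, 2*w*(u:ZMod p)^2*A₀*v⁻¹^2;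
           2*A₀*v⁻¹^2, (u:ZMod p)^2*(A₀^2+w)*v⁻¹^2], ?_, ?_, ?_, ?_, ?_⟩
      · rw [Matrix.det_fin_two_of]
        apply isUnit_iff_ne_zero.mpr
        have e : A₀*v⁻¹ * ((u:ZMod p)^2*A₀*v⁻¹) - w*(u:ZMod p)^2*v⁻¹ * v⁻¹
            = (u:ZMod p)^2 * n * v⁻¹^2 := by rw [hn]; ring
        rw [e]
        exact mul_ne_zero (mul_ne_zero (pow_ne_zero 2 hu0) hn0) (pow_ne_zero 2 (inv_ne_zero hv0))
      · have e : ((A₀^2+w)*v⁻¹^2) * ((u:ZMod p)^2*(A₀^2+w)*v⁻¹^2)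
            - (2*w*(u:ZMod p)^2*A₀*v⁻¹^2) * (2*A₀*v⁻¹^2) = ((u:ZMod p)*n)^2 * v⁻¹^4 := by
          rw [hn]; ring
        rw [Matrix.det_fin_two_of, e, hv]
        apply isUnit_iff_ne_zero.mpr
        field_simp
        exact one_ne_zero
      · left
        have e : ((A₀^2+w)*v⁻¹^2) * ((u:ZMod p)^2*(A₀^2+w)*v⁻¹^2)
            - (2*w*(u:ZMod p)^2*A₀*v⁻¹^2) * (2*A₀*v⁻¹^2) = ((u:ZMod p)*n)^2 * v⁻¹^4 := by
          rw [hn]; ring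
        rw [Matrix.det_fin_two_of, e, hv]
        field_simp
      · intro a b
        simp [BQF.eval]
        ring
      · intro a b
        simp [BQF.eval]
        ring

/-- `(a² + w·b², 2ab)` is equivalent to `(a² + w'·b², 2ab)` iff `w'/w` is a
fourth power of a unit; consequently the equivalence classes of such pairs
correspond bijectively to elements of `(ℤ/p)ˣ/((ℤ/p)ˣ)⁴`. -/
theorem classification_of_standard_pairs (p : ℕ) [Fact p.Prime] (hp : 3 < p) :
    (∀ w w' : ZMod p, w ≠ 0 → w' ≠ 0 →
      (PairEquiv ((⟨1, 0, w⟩ : BQF p), ⟨0, 2, 0⟩) (⟨1, 0, w'⟩, ⟨0, 2, 0⟩) ↔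
        ∃ u : (ZMod p)ˣ, w' = w * (u : ZMod p) ^ 4)) ∧
    Nonempty
      (Quot (fun w w' : {w : ZMod p // w ≠ 0} =>
          PairEquiv ((⟨1, 0, w.1⟩ : BQF p), ⟨0, 2, 0⟩) (⟨1, 0, w'.1⟩, ⟨0, 2, 0⟩)) ≃
        ((ZMod p)ˣ ⧸ (powMonoidHom 4 : (ZMod p)ˣ →* (ZMod p)ˣ).range)) := by
  have main : ∀ w w' : ZMod p, w ≠ 0 → w' ≠ 0 →
      (PairEquiv ((⟨1, 0, w⟩ : BQF p), ⟨0, 2, 0⟩) (⟨1, 0, w'⟩, ⟨0, 2, 0⟩) ↔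
        ∃ u : (ZMod p)ˣ, w' = w * (u : ZMod p) ^ 4) :=
    fun w w' hw hw' => BQF.pair_equiv_iff hp w w' hw hw'
  refine ⟨main, ?_⟩
  set rel := fun w w' : {w : ZMod p // w ≠ 0} =>
      PairEquiv ((⟨1, 0, w.1⟩ : BQF p), ⟨0, 2, 0⟩) (⟨1, 0, w'.1⟩, ⟨0, 2, 0⟩) with hreldef
  have hrel : ∀ a b : {w : ZMod p // w ≠ 0}, rel a b ↔
      ∃ u : (ZMod p)ˣ, b.1 = a.1 * (u : ZMod p) ^ 4 :=
    fun a b => main a.1 b.1 a.2 b.2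
  refine ⟨{
    toFun := Quot.lift (fun w => QuotientGroup.mk (Units.mk0 w.1 w.2)) ?_
    invFun := fun q => Quotient.liftOn' q
      (fun u => Quot.mk rel ⟨(u : ZMod p), u.ne_zero⟩) ?_
    left_inv := ?_
    right_inv := ?_ }⟩
  · intro a b hab
    obtain ⟨u, hu⟩ := (hrel a b).mp hab
    rw [QuotientGroup.eq]
    refine ⟨u, ?_⟩
    rw [powMonoidHom_apply, eq_inv_mul_iff_mul_eq]
    apply Units.ext
    simpa using hu.symm
  · intro a b hab
    have h := QuotientGroup.leftRel_apply.mp hab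
    obtain ⟨c, hc⟩ := h
    apply Quot.sound
    refine (hrel _ _).mpr ⟨c, ?_⟩
    have hb : a * (powMonoidHom 4) c = b := by rw [hc]; group
    have := congrArg Units.val hb.symm
    simpa using this
  · intro q
    induction q using Quot.ind with
    | mk w => rfl
  · intro q
    induction q using Quotient.inductionOn' with
    | h u => exact congrArg QuotientGroup.mk (Units.ext rfl)
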